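/- Let β > 0, L > 0, and ℓ = ⌊β⌋. Let x₀ ∈ ℝ, h > 0, C ≥ 1, let f : ℝ → ℝ be ℓ-times differentiable with the ℓ-th derivative satisfying |f^{(ℓ)}(x) − f^{(ℓ)}(x′)| ≤ L·|x − x′|^{β−ℓ} for all x, x′, and let X₁, …, X_n ∈ ℝ and W₁, …, W_n ∈ ℝ satisfy: (i) ∑_{k=1}^n W_k (X_k − x₀)^j equals 1 if j = 0 and equals 0 for each j ∈ {1,…,ℓ}; (ii) ∑_{k=1}^n |W_k| ≤ C; (iii) W_k = 0 whenever |X_k − x₀| > h. Then |∑_{k=1}^n W_k f(X_k) − f(x₀)| ≤ C·L·h^β / ℓ!. -/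

import Mathlib

open Finset Set

lemma lp_iterWithin_eq (ℓ : ℕ) (f : ℝ → ℝ)
    (hdiff : ∀ i < ℓ, Differentiable ℝ (iteratedDeriv i f))
    {s : Set ℝ} (hs : UniqueDiffOn ℝ s) :
    ∀ i ≤ ℓ, ∀ x ∈ s, iteratedDerivWithin i f s x = iteratedDeriv i f x := by
  intro i
  induction i with
  | zero => intro _ x _; simp
  | succ i ih =>
    intro hi x hx
    have hi' : i < ℓ := hi
    rw [iteratedDerivWithin_succ, iteratedDeriv_succ]
    have heq : derivWithin (iteratedDerivWithin i f s) s x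
        = derivWithin (iteratedDeriv i f) s x := by
      apply derivWithin_congr
      · intro y hy; exact ih (le_of_lt hi') y hy
      · exact ih (le_of_lt hi') x hx
    rw [heq]
    exact ((hdiff i hi') x).derivWithin (hs x hx)

lemma lp_iter_reflect (f : ℝ → ℝ) (c : ℝ) (n : ℕ) :
    iteratedDeriv n (fun t => f (c - t)) = fun t => (-1 : ℝ) ^ n * iteratedDeriv n f (c - t) := by
  funext t
  have h1 : (fun t : ℝ => f (c - t)) = fun t : ℝ => (fun z => f (z + c)) (-t) := by
    funext u; ring_nf
  rw [h1, iteratedDeriv_comp_neg n (fun z => f (z + c)) t,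
    iteratedDeriv_comp_add_const n f c]
  simp [smul_eq_mul, neg_add_eq_sub]

/-- Taylor remainder bound, right side. -/
lemma lp_key_right (L α : ℝ) (hL : 0 ≤ L) (hα : 0 ≤ α) (ℓ : ℕ) (f : ℝ → ℝ)
    (hdiff : ∀ i < ℓ, Differentiable ℝ (iteratedDeriv i f))
    (hHolder : ∀ x x' : ℝ, |iteratedDeriv ℓ f x - iteratedDeriv ℓ f x'| ≤ L * |x - x'| ^ α)
    (x₀ x : ℝ) (hx : x₀ ≤ x) :
    |f x - ∑ j ∈ Finset.range (ℓ + 1), iteratedDeriv j f x₀ * (x - x₀) ^ j / (Nat.factorial j)|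
      ≤ L * |x - x₀| ^ ℓ * |x - x₀| ^ α / (Nat.factorial ℓ) := by
  rcases eq_or_lt_of_le hx with heq | hlt
  · subst heq
    have hsum : ∑ j ∈ Finset.range (ℓ + 1),
        iteratedDeriv j f x₀ * (x₀ - x₀) ^ j / (Nat.factorial j) = f x₀ := by
      rw [Finset.sum_eq_single 0]
      · simp
      · intro b _ hb
        simp [sub_self, zero_pow hb]
      · simp
    rw [hsum, sub_self, abs_zero]
    positivity
  · rcases Nat.eq_zero_or_pos ℓ with hℓ0 | hℓpos
    · subst hℓ0
      have hsum : ∑ j ∈ Finset.range (0 + 1),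
          iteratedDeriv j f x₀ * (x - x₀) ^ j / (Nat.factorial j) = f x₀ := by simp
      rw [hsum]
      simpa using hHolder x x₀
    · set m := ℓ - 1 with hm
      have hmℓ : m + 1 = ℓ := Nat.succ_pred_eq_of_pos hℓpos
      set s : Set ℝ := Set.Icc x₀ x with hs
      have hus : UniqueDiffOn ℝ s := uniqueDiffOn_Icc hlt
      have hwe := lp_iterWithin_eq ℓ f hdiff hus
      have hcd : ContDiffOn ℝ m f s := by
        apply ContDiff.contDiffOn
        apply contDiff_of_differentiable_iteratedDeriv
        intro i hi
        apply hdiff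
        have : i ≤ m := by exact_mod_cast hi
        omega
      have hdo : DifferentiableOn ℝ (iteratedDerivWithin m f s) (Set.Ioo x₀ x) := by
        apply DifferentiableOn.congr
          (((hdiff m (by omega)).differentiableOn) :
            DifferentiableOn ℝ (iteratedDeriv m f) (Set.Ioo x₀ x))
        intro y hy
        exact hwe m (by omega) y (Set.mem_Icc_of_Ioo hy)
      have hlag := taylor_mean_remainder_lagrange hlt.ne
        (by rw [Set.uIcc_of_le hx]; exact hcd)
        (by rw [Set.uIcc_of_le hx, Set.uIoo_of_lt hlt]; exact hdo)
      rw [Set.uIcc_of_le hx, Set.uIoo_of_lt hlt] at hlag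
      obtain ⟨ξ, hξ, hξeq⟩ := hlag
      have htay : taylorWithinEval f m s x₀ x
          = ∑ j ∈ Finset.range (m + 1),
              iteratedDeriv j f x₀ * (x - x₀) ^ j / (Nat.factorial j) := by
        rw [taylor_within_apply]
        apply Finset.sum_congr rfl
        intro j hj
        rw [hwe j (by simp only [Finset.mem_range] at hj; omega) x₀ (Set.left_mem_Icc.mpr hx)]
        simp only [smul_eq_mul]
        ring
      have hξd : iteratedDerivWithin (m + 1) f s ξ = iteratedDeriv (m + 1) f ξ :=
        hwe (m + 1) (by omega) ξ (Set.mem_Icc_of_Ioo hξ)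
      rw [htay, hξd] at hξeq
      have hsplit : f x - ∑ j ∈ Finset.range (ℓ + 1),
            iteratedDeriv j f x₀ * (x - x₀) ^ j / (Nat.factorial j)
          = (iteratedDeriv ℓ f ξ - iteratedDeriv ℓ f x₀) * (x - x₀) ^ ℓ / (Nat.factorial ℓ) := by
        rw [Finset.sum_range_succ, ← hmℓ, sub_add_eq_sub_sub, hξeq]
        ring
      have hA : |iteratedDeriv ℓ f ξ - iteratedDeriv ℓ f x₀| ≤ L * |x - x₀| ^ α := by
        calc |iteratedDeriv ℓ f ξ - iteratedDeriv ℓ f x₀| ≤ L * |ξ - x₀| ^ α := hHolder ξ x₀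
          _ ≤ L * |x - x₀| ^ α := by
            apply mul_le_mul_of_nonneg_left _ hL
            apply Real.rpow_le_rpow (abs_nonneg _) _ hα
            rw [abs_of_pos (sub_pos.2 hξ.1), abs_of_pos (sub_pos.2 hlt)]
            linarith [hξ.2]
      rw [hsplit, abs_div, abs_mul, abs_pow, Nat.abs_cast]
      apply div_le_div_of_nonneg_right ?_ (Nat.cast_nonneg _)
      calc |iteratedDeriv ℓ f ξ - iteratedDeriv ℓ f x₀| * |x - x₀| ^ ℓ
          ≤ (L * |x - x₀| ^ α) * |x - x₀| ^ ℓ :=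
            mul_le_mul_of_nonneg_right hA (pow_nonneg (abs_nonneg _) _)
        _ = L * |x - x₀| ^ ℓ * |x - x₀| ^ α := by ring

/-- Taylor remainder bound, both sides. -/
lemma lp_key (L α : ℝ) (hL : 0 ≤ L) (hα : 0 ≤ α) (ℓ : ℕ) (f : ℝ → ℝ)
    (hdiff : ∀ i < ℓ, Differentiable ℝ (iteratedDeriv i f))
    (hHolder : ∀ x x' : ℝ, |iteratedDeriv ℓ f x - iteratedDeriv ℓ f x'| ≤ L * |x - x'| ^ α)
    (x₀ x : ℝ) :
    |f x - ∑ j ∈ Finset.range (ℓ + 1), iteratedDeriv j f x₀ * (x - x₀) ^ j / (Nat.factorial j)|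
      ≤ L * |x - x₀| ^ ℓ * |x - x₀| ^ α / (Nat.factorial ℓ) := by
  rcases le_total x₀ x with hx | hx
  · exact lp_key_right L α hL hα ℓ f hdiff hHolder x₀ x hx
  · -- reflect
    set g : ℝ → ℝ := fun t => f (2 * x₀ - t) with hg
    have hgit : ∀ n : ℕ, iteratedDeriv n g
        = fun t => (-1 : ℝ) ^ n * iteratedDeriv n f (2 * x₀ - t) :=
      fun n => lp_iter_reflect f (2 * x₀) n
    have hgdiff : ∀ i < ℓ, Differentiable ℝ (iteratedDeriv i g) := by
      intro i hi
      rw [hgit i]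
      apply Differentiable.const_mul
      exact (hdiff i hi).comp ((differentiable_const _).sub differentiable_id)
    have hgH : ∀ y y' : ℝ, |iteratedDeriv ℓ g y - iteratedDeriv ℓ g y'| ≤ L * |y - y'| ^ α := by
      intro y y'
      rw [hgit ℓ]
      simp only
      rw [← mul_sub, abs_mul, abs_pow, abs_neg, abs_one, one_pow, one_mul]
      calc |iteratedDeriv ℓ f (2 * x₀ - y) - iteratedDeriv ℓ f (2 * x₀ - y')|
          ≤ L * |(2 * x₀ - y) - (2 * x₀ - y')| ^ α := hHolder _ _
        _ = L * |y - y'| ^ α := by rw [show (2 * x₀ - y) - (2 * x₀ - y') = -(y - y') by ring,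
            abs_neg]
    have hkey := lp_key_right L α hL hα ℓ g hgdiff hgH x₀ (2 * x₀ - x) (by linarith)
    have hgx : g (2 * x₀ - x) = f x := by simp [hg]
    have hsum : ∑ j ∈ Finset.range (ℓ + 1),
          iteratedDeriv j g x₀ * ((2 * x₀ - x) - x₀) ^ j / (Nat.factorial j)
        = ∑ j ∈ Finset.range (ℓ + 1),
          iteratedDeriv j f x₀ * (x - x₀) ^ j / (Nat.factorial j) := by
      apply Finset.sum_congr rfl
      intro j _
      rw [hgit j]
      simp only
      rw [show (2 : ℝ) * x₀ - x₀ = x₀ by ring]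
      rw [show ((2 * x₀ - x) - x₀ : ℝ) = -(x - x₀) by ring]
      have h2 : ((-1 : ℝ)) ^ j * (-(x - x₀)) ^ j = (x - x₀) ^ j := by
        rw [← mul_pow]; norm_num
      rw [mul_comm ((-1 : ℝ) ^ j) (iteratedDeriv j f x₀), mul_assoc, h2]
    rw [hgx, hsum] at hkey
    have habs : |(2 * x₀ - x) - x₀| = |x - x₀| := by
      rw [show ((2 * x₀ - x) - x₀ : ℝ) = -(x - x₀) by ring, abs_neg]
    rwa [habs] at hkey

open Finset

/-- **Bias bound for local polynomial weights on a Hölder class.** Let `β > 0`, `ℓ = ⌊β⌋`, and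
let `f` be `ℓ`-times differentiable with `|f^{(ℓ)}(x) − f^{(ℓ)}(x')| ≤ L |x − x'|^{β−ℓ}`.
If the weights `W_k` reproduce polynomials of degree ≤ ℓ at `x₀`, satisfy `∑ |W_k| ≤ C`, and
vanish when `|X_k − x₀| > h`, then `|∑ W_k f(X_k) − f(x₀)| ≤ C L h^β / ℓ!`. -/
theorem lp_bias_bound
    (β L : ℝ) (hβ : 0 < β) (hL : 0 < L)
    (ℓ : ℕ) (hℓ : ℓ = ⌊β⌋₊)
    (x₀ h C : ℝ) (hh : 0 < h) (hC : 1 ≤ C)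
    (f : ℝ → ℝ)
    (hdiff : ∀ i < ℓ, Differentiable ℝ (iteratedDeriv i f))
    (hHolder : ∀ x x' : ℝ,
      |iteratedDeriv ℓ f x - iteratedDeriv ℓ f x'| ≤ L * |x - x'| ^ (β - ℓ))
    (n : ℕ) (X W : Fin n → ℝ)
    (hrepr0 : ∑ k, W k = 1)
    (hrepr : ∀ j : ℕ, 1 ≤ j → j ≤ ℓ → ∑ k, W k * (X k - x₀) ^ j = 0)
    (habs : ∑ k, |W k| ≤ C)
    (hsupp : ∀ k, h < |X k - x₀| → W k = 0) :
    |∑ k, W k * f (X k) - f x₀| ≤ C * L * h ^ β / (Nat.factorial ℓ) := by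
  have hβℓ : (ℓ : ℝ) ≤ β := by rw [hℓ]; exact Nat.floor_le hβ.le
  set α : ℝ := β - ℓ with hαdef
  have hα : 0 ≤ α := by simp [hαdef]; linarith
  have key := lp_key L α hL.le hα ℓ f hdiff hHolder x₀
  set P : ℝ → ℝ := fun y =>
    ∑ j ∈ Finset.range (ℓ + 1), iteratedDeriv j f x₀ * (y - x₀) ^ j / (Nat.factorial j) with hPdef
  have hP : ∑ k, W k * P (X k) = f x₀ := by
    have hterm : ∀ k, W k * P (X k) = ∑ j ∈ Finset.range (ℓ + 1),
        (iteratedDeriv j f x₀ / (Nat.factorial j)) * (W k * (X k - x₀) ^ j) := by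
      intro k
      rw [hPdef, Finset.mul_sum]
      apply Finset.sum_congr rfl
      intro j _
      ring
    simp_rw [hterm]
    rw [Finset.sum_comm]
    simp_rw [← Finset.mul_sum]
    rw [Finset.sum_eq_single 0]
    · simp [hrepr0]
    · intro j hj hj0
      rw [hrepr j (Nat.one_le_iff_ne_zero.2 hj0)
        (by simp only [Finset.mem_range] at hj; omega), mul_zero]
    · simp
  have hdecomp : ∑ k, W k * f (X k) - f x₀ = ∑ k, W k * (f (X k) - P (X k)) := by
    simp_rw [mul_sub]
    rw [Finset.sum_sub_distrib, hP]
  rw [hdecomp]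
  have hbound : ∀ k, |W k| * |f (X k) - P (X k)| ≤ |W k| * (L * h ^ β / (Nat.factorial ℓ)) := by
    intro k
    by_cases hw : W k = 0
    · simp [hw]
    · have hXk : |X k - x₀| ≤ h := by
        by_contra hc
        push_neg at hc
        exact hw (hsupp k hc)
      apply mul_le_mul_of_nonneg_left ?_ (abs_nonneg _)
      calc |f (X k) - P (X k)|
          ≤ L * |X k - x₀| ^ ℓ * |X k - x₀| ^ α / (Nat.factorial ℓ) := key (X k)
        _ ≤ L * h ^ ℓ * h ^ α / (Nat.factorial ℓ) := by
            gcongr <;> first | exact abs_nonneg _ | exact hXk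
        _ = L * h ^ β / (Nat.factorial ℓ) := by
            rw [← Real.rpow_natCast h ℓ, mul_assoc, ← Real.rpow_add hh,
              show (ℓ : ℝ) + α = β by rw [hαdef]; ring]
  calc |∑ k, W k * (f (X k) - P (X k))|
      ≤ ∑ k, |W k * (f (X k) - P (X k))| := Finset.abs_sum_le_sum_abs _ _
    _ = ∑ k, |W k| * |f (X k) - P (X k)| := by simp_rw [abs_mul]
    _ ≤ ∑ k, |W k| * (L * h ^ β / (Nat.factorial ℓ)) := Finset.sum_le_sum fun k _ => hbound k
    _ = (∑ k, |W k|) * (L * h ^ β / (Nat.factorial ℓ)) := by rw [← Finset.sum_mul]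
    _ ≤ C * (L * h ^ β / (Nat.factorial ℓ)) := by
        apply mul_le_mul_of_nonneg_right habs
        have : 0 < h ^ β := Real.rpow_pos_of_pos hh β
        positivity
    _ = C * L * h ^ β / (Nat.factorial ℓ) := by ring
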